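/- (Proposition 8: no strong Master Theorem for the contextual algebra.) For r = 3, the leftmost reduction associated with the reduction system (SH) does not annihilate the degree-3 component of Ferm(1)·Bos(1): [FB_3(1)]_{SH} ≠ 0; consequently [Ferm(1)·Bos(1)]_{SH} ≠ 1. -/

import Mathlib

/-!
Common framework: fix a positive integer `r`; the alphabet `A = {1,…,r}` is modelled
by `Fin r` (the letter `k ∈ A` corresponding to `⟨k-1, _⟩ : Fin r`, with the same
linear order).  A biword is a word in the free monoid on biletters (columns);
`MonoidAlgebra R (Biword r)` is the corresponding large algebra restricted to
finitely supported linear combinations of biwords.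
-/

open LaurentPolynomial

noncomputable section

/-- A biletter: a column `(x over a)` with top letter `x` and bottom letter `a`. -/
abbrev Biletter (r : ℕ) := Fin r × Fin r

/-- A biword: a word of biletters; biwords form the free monoid on biletters,
with identity the empty biword. -/
abbrev Biword (r : ℕ) := FreeMonoid (Biletter r)

/-- The biword with the given list of columns. -/
def ofCols {r : ℕ} (l : List (Biletter r)) : Biword r := FreeMonoid.ofList l

/-- The biword with the given top word and bottom word. -/
def mkBW {r : ℕ} (top bot : List (Fin r)) : Biword r := FreeMonoid.ofList (top.zip bot)

/-- Number of inversions of a word: the number of pairs `i < j` with `w i > w j`. -/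
def wordInv {r : ℕ} : List (Fin r) → ℕ
  | [] => 0
  | a :: l => l.countP (fun b => decide (b < a)) + wordInv l

/-- The non-decreasing rearrangement `w̄` of a word `w`. -/
def sortWord {r : ℕ} (w : List (Fin r)) : List (Fin r) := List.insertionSort (· ≤ ·) w

/-- Top word of a biword. -/
def topWord {r : ℕ} (α : Biword r) : List (Fin r) := (FreeMonoid.toList α).map Prod.fst

/-- Bottom word of a biword. -/
def botWord {r : ℕ} (α : Biword r) : List (Fin r) := (FreeMonoid.toList α).map Prod.snd

/-- Number of exceedances of a biword: the number of columns whose top letter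
strictly exceeds its bottom letter. -/
def excBW {r : ℕ} (α : Biword r) : ℕ :=
  (FreeMonoid.toList α).countP (fun p => decide (p.2 < p.1))

/-- `inv⁻` of a biword: inversions of the bottom word minus inversions of the top word. -/
def invMinus {r : ℕ} (α : Biword r) : ℤ :=
  (wordInv (botWord α) : ℤ) - (wordInv (topWord α) : ℤ)

/-- A circuit: a biword whose top word is a rearrangement of its bottom word. -/
def IsCircuit {r : ℕ} (α : Biword r) : Prop := (topWord α).Perm (botWord α)

/-- An expression is circular if it is a linear combination of circuits. -/
def IsCircular {r : ℕ} {R : Type} [CommRing R] (E : MonoidAlgebra R (Biword r)) : Prop :=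
  ∀ α ∈ E.coeff.support, IsCircuit α

/-- The sorted list `i₁ < i₂ < ⋯ < i_l` of the elements of `J ⊆ A`. -/
def sortedJ {r : ℕ} (J : Finset (Fin r)) : List (Fin r) := J.sort (· ≤ ·)

/-- The permutations of a subset `J` of the alphabet, encoded as the permutations of
the whole alphabet fixing every letter outside `J`. -/
def permsOn (r : ℕ) (J : Finset (Fin r)) : Finset (Equiv.Perm (Fin r)) :=
  Finset.univ.filter fun σ => ∀ i ∉ J, σ i = i

/-- The top word `σ(i₁)…σ(i_l)` of the biword of a permutation `σ` of `J`;
`inv σ` is by definition `wordInv` of this word. -/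
def sigmaTop {r : ℕ} (J : Finset (Fin r)) (σ : Equiv.Perm (Fin r)) :
    List (Fin r) := (sortedJ J).map σ

/-- The biword `(σ(i₁)…σ(i_l) over i₁…i_l)` of a permutation `σ` of `J`. -/
def sigmaBW {r : ℕ} (J : Finset (Fin r)) (σ : Equiv.Perm (Fin r)) :
    Biword r := mkBW (sigmaTop J σ) (sortedJ J)

/-- A word of biletters is irreducible for a reduction system (given as the partial
function `rule` assigning to each length-2 left-hand side its right-hand side) if
none of its length-2 factors is a left-hand side. -/
def IrredWord {r : ℕ} {R : Type} [CommRing R]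
    (rule : Biletter r → Biletter r → Option (MonoidAlgebra R (Biword r)))
    (l : List (Biletter r)) : Prop :=
  List.Chain' (fun c d => rule c d = none) l

/-- `red` is the leftmost reduction associated with the reduction system `rule`:
the `R`-linear endomorphism of the biword algebra determined recursively by
`red β = β` for `β` irreducible, and `red (β₁ γ β₂) = red (β₁ ⬝ E_γ ⬝ β₂)` whenever
`γ = cd` is the leftmost length-2 factor of `β₁ γ β₂` that is a left-hand side
(leftmost-ness being expressed by irreducibility of `β₁ ++ [c]`), with `E_γ` the
corresponding right-hand side.  (The recursion terminates, so such a map exists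
and is unique.) -/
structure IsLeftmostReduction {r : ℕ} {R : Type} [CommRing R]
    (rule : Biletter r → Biletter r → Option (MonoidAlgebra R (Biword r)))
    (red : MonoidAlgebra R (Biword r) →ₗ[R] MonoidAlgebra R (Biword r)) : Prop where
  map_irred : ∀ l : List (Biletter r), IrredWord rule l →
    red (MonoidAlgebra.single (ofCols l) 1) = MonoidAlgebra.single (ofCols l) 1
  map_step : ∀ (l₁ : List (Biletter r)) (c d : Biletter r)
      (E : MonoidAlgebra R (Biword r)) (l₂ : List (Biletter r)),
    rule c d = some E → IrredWord rule (l₁ ++ [c]) →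
    red (MonoidAlgebra.single (ofCols (l₁ ++ c :: d :: l₂)) 1)
      = red (MonoidAlgebra.single (ofCols l₁) 1 * E * MonoidAlgebra.single (ofCols l₂) 1)

/-- Degree-`n` component `FB_n(1)` of `Ferm(1) ⬝ Bos(1)`, with coefficients in `ℤ`:
the sum over triples `(J, σ, w)` with `|J| + length w = n` of
`(-1)^{|J|} (-1)^{inv σ} ⬝ (biword of σ) ⬝ (w̄ over w)`. -/
def FB1 (r n : ℕ) : MonoidAlgebra ℤ (Biword r) :=
  ∑ J : Finset (Fin r), ∑ σ ∈ permsOn r J,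
    if J.card ≤ n then
      ∑ w : Fin (n - J.card) → Fin r,
        MonoidAlgebra.single
          (sigmaBW J σ * mkBW (sortWord (List.ofFn w)) (List.ofFn w))
          ((-1 : ℤ) ^ (J.card + wordInv (sigmaTop J σ)))
    else 0

/-- Degree-`n` component `FB_n(1)` of `Ferm(1) ⬝ Bos(1)`, with coefficients in
`ℤ[q,q⁻¹]` (the specialization `q = 1` of `FB_n(q)`). -/
def FB1q (r n : ℕ) : MonoidAlgebra (LaurentPolynomial ℤ) (Biword r) :=
  ∑ J : Finset (Fin r), ∑ σ ∈ permsOn r J,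
    if J.card ≤ n then
      ∑ w : Fin (n - J.card) → Fin r,
        MonoidAlgebra.single
          (sigmaBW J σ * mkBW (sortWord (List.ofFn w)) (List.ofFn w))
          ((-1 : LaurentPolynomial ℤ) ^ (J.card + wordInv (sigmaTop J σ)))
    else 0

/-- Degree-`n` component `FB_n(q)` of `Ferm(q) ⬝ Bos(q)`, with coefficients in
`ℤ[q,q⁻¹]` (with `q` the Laurent variable `T 1`): the coefficient of the biword
`(biword of σ) ⬝ (w̄ over w)` is `(-1)^{|J|} (-q)^{-inv σ} q^{inv w}
= (-1)^{|J| + inv σ} q^{inv w - inv σ}`. -/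
def FBq (r n : ℕ) : MonoidAlgebra (LaurentPolynomial ℤ) (Biword r) :=
  ∑ J : Finset (Fin r), ∑ σ ∈ permsOn r J,
    if J.card ≤ n then
      ∑ w : Fin (n - J.card) → Fin r,
        MonoidAlgebra.single
          (sigmaBW J σ * mkBW (sortWord (List.ofFn w)) (List.ofFn w))
          ((-1 : LaurentPolynomial ℤ) ^ (J.card + wordInv (sigmaTop J σ)) *
            T ((wordInv (List.ofFn w) : ℤ) - (wordInv (sigmaTop J σ) : ℤ)))
    else 0

/-- The ring `ℤ[t,t⁻¹,q,q⁻¹]`, realized as Laurent polynomials in `q` over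
Laurent polynomials in `t`. -/
abbrev Rtq : Type := LaurentPolynomial (LaurentPolynomial ℤ)

/-- The variable `q` of `ℤ[t,t⁻¹,q,q⁻¹]`. -/
def qv : Rtq := T 1
/-- The variable `t` of `ℤ[t,t⁻¹,q,q⁻¹]`. -/
def tv : Rtq := C (T 1)
/-- `t^k` for `k : ℤ`. -/
def tpow (k : ℤ) : Rtq := C (T k)
/-- `q^k` for `k : ℤ`. -/
def qpow (k : ℤ) : Rtq := T k

/-- Degree-`n` component `FB_n(t,q)` of `Ferm(t,q) ⬝ Bos(t,q)`, with coefficients in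
`ℤ[t,t⁻¹,q,q⁻¹]`: the coefficient of `(biword of σ) ⬝ (w̄ over w)` is
`(-1)^{|J|} t^{exc(biword of σ)} (-q)^{-inv σ} ⬝ t^{exc(w̄ over w)} q^{inv w}`. -/
def FBtq (r n : ℕ) : MonoidAlgebra Rtq (Biword r) :=
  ∑ J : Finset (Fin r), ∑ σ ∈ permsOn r J,
    if J.card ≤ n then
      ∑ w : Fin (n - J.card) → Fin r,
        MonoidAlgebra.single
          (sigmaBW J σ * mkBW (sortWord (List.ofFn w)) (List.ofFn w))
          ((-1 : Rtq) ^ (J.card + wordInv (sigmaTop J σ)) *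
            tpow ((excBW (sigmaBW J σ) : ℤ) +
              (excBW (mkBW (sortWord (List.ofFn w)) (List.ofFn w)) : ℤ)) *
            qpow ((wordInv (List.ofFn w) : ℤ) - (wordInv (sigmaTop J σ) : ℤ)))
    else 0

/-- `V(x,y,a,b) = (a−x−1/2)(a−y−1/2)(b−x−1/2)(b−y−1/2)` (it depends only on the
differences of the letters, hence is insensitive to the 0-based re-indexing). -/
def V {r : ℕ} (x y a b : Fin r) : ℚ :=
  ((a.val : ℚ) - x.val - 1/2) * ((a.val : ℚ) - y.val - 1/2) *
    ((b.val : ℚ) - x.val - 1/2) * ((b.val : ℚ) - y.val - 1/2)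

/-- Generators of the two-sided ideal `I(SH)`: `(xy over ab) − (yx over ab)` for `x>y`
with `V(x,y,a,b) > 0`, and `(xy over ab) − (yx over ba)` for `x>y` with
`V(x,y,a,b) < 0`. -/
def SHgens (r : ℕ) : Set (MonoidAlgebra ℤ (Biword r)) :=
  {E | (∃ x y a b : Fin r, y < x ∧ 0 < V x y a b ∧
          E = MonoidAlgebra.single (mkBW [x, y] [a, b]) 1
             - MonoidAlgebra.single (mkBW [y, x] [a, b]) 1) ∨
       (∃ x y a b : Fin r, y < x ∧ V x y a b < 0 ∧
          E = MonoidAlgebra.single (mkBW [x, y] [a, b]) 1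
             - MonoidAlgebra.single (mkBW [y, x] [b, a]) 1)}

/-- The reduction system `(SH)`, whose right-hand sides are single biwords:
for `x>y`, `(xy over ab) → (yx over ab)` if `V(x,y,a,b) > 0` and
`(xy over ab) → (yx over ba)` if `V(x,y,a,b) < 0` (`V` never vanishes). -/
def SHrulePair (r : ℕ) (c d : Biletter r) : Option (Biletter r × Biletter r) :=
  if d.1 < c.1 then
    if 0 < V c.1 d.1 c.2 d.2 then some ((d.1, c.2), (c.1, d.2))
    else some (d, c)
  else none

/-- The reduction system `(SH)`, with right-hand sides in the biword algebra over `ℤ`. -/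
def SHrule (r : ℕ) (c d : Biletter r) : Option (MonoidAlgebra ℤ (Biword r)) :=
  (SHrulePair r c d).map fun p => MonoidAlgebra.single (ofCols [p.1, p.2]) 1

/-- An `(SH)`-rewriting step at position `(i, i+1)` (1-based): replace the length-2
factor of the biword occupying columns `i` and `i+1`, when it is a left-hand side
of `(SH)`, by the corresponding right-hand side. -/
def SHstepAt (r : ℕ) (i : ℕ) (β β' : List (Biletter r)) : Prop :=
  ∃ (l₁ : List (Biletter r)) (c d e f : Biletter r) (l₂ : List (Biletter r)),
    l₁.length + 1 = i ∧ SHrulePair r c d = some (e, f) ∧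
    β = l₁ ++ c :: d :: l₂ ∧ β' = l₁ ++ e :: f :: l₂

/-! ### Auxiliary development for Proposition 8 -/

namespace Prop8Aux

abbrev BL := Biletter 3

instance : DecidableEq (Biword 3) := fun a b =>
  inferInstanceAs (Decidable (FreeMonoid.toList a = FreeMonoid.toList b))

/-- Integer version of (16 times) `V`. -/
def Wint (x y a b : Fin 3) : ℤ :=
  (2*(a:ℤ) - 2*(x:ℤ) - 1) * (2*(a:ℤ) - 2*(y:ℤ) - 1) *
    (2*(b:ℤ) - 2*(x:ℤ) - 1) * (2*(b:ℤ) - 2*(y:ℤ) - 1)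

lemma V_pos_iff (x y a b : Fin 3) : 0 < V x y a b ↔ 0 < Wint x y a b := by
  have h : ((Wint x y a b : ℚ)) = 16 * V x y a b := by
    simp only [Wint, V]
    push_cast
    ring
  constructor
  · intro hv
    have : (0:ℚ) < (Wint x y a b : ℚ) := by rw [h]; linarith
    exact_mod_cast this
  · intro hw
    have : (0:ℚ) < (Wint x y a b : ℚ) := by exact_mod_cast hw
    nlinarith [this, h]

/-- Integer-arithmetic version of `SHrulePair 3`. -/
def rulePairInt (c d : BL) : Option (BL × BL) :=
  if d.1 < c.1 then
    if 0 < Wint c.1 d.1 c.2 d.2 then some ((d.1, c.2), (c.1, d.2))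
    else some (d, c)
  else none

lemma rulePair_eq (c d : BL) : SHrulePair 3 c d = rulePairInt c d := by
  unfold SHrulePair rulePairInt
  by_cases h1 : d.1 < c.1
  · simp only [h1, if_true]
    by_cases h2 : 0 < V c.1 d.1 c.2 d.2
    · rw [if_pos h2, if_pos ((V_pos_iff _ _ _ _).1 h2)]
    · rw [if_neg h2, if_neg (fun hw => h2 ((V_pos_iff _ _ _ _).2 hw))]
  · simp [h1]

lemma rulePairInt_tops {c d e f : BL} (h : rulePairInt c d = some (e, f)) :
    d.1 < c.1 ∧ e.1 = d.1 ∧ f.1 = c.1 := by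
  unfold rulePairInt at h
  by_cases h1 : d.1 < c.1
  · rw [if_pos h1] at h
    by_cases h2 : 0 < Wint c.1 d.1 c.2 d.2
    · rw [if_pos h2] at h
      injection h with h
      injection h with h h'
      subst h; subst h'
      exact ⟨h1, rfl, rfl⟩
    · rw [if_neg h2] at h
      injection h with h
      injection h with h h'
      subst h; subst h'
      exact ⟨h1, rfl, rfl⟩
  · rw [if_neg h1] at h; exact absurd h (by simp)

lemma SHrule_none {c d : BL} (h : rulePairInt c d = none) : SHrule 3 c d = none := by
  simp [SHrule, rulePair_eq, h]

lemma SHrule_some {c d e f : BL} (h : rulePairInt c d = some (e, f)) :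
    SHrule 3 c d = some (MonoidAlgebra.single (ofCols [e, f]) 1) := by
  simp [SHrule, rulePair_eq, h]

/-- One leftmost rewriting step. -/
def step : List BL → Option (List BL)
  | c :: d :: t =>
    match rulePairInt c d with
    | some (e, f) => some (e :: f :: t)
    | none => (step (d :: t)).map (c :: ·)
  | _ => none

lemma step_none : ∀ {l : List BL}, step l = none → IrredWord (SHrule 3) l := by
  intro l
  induction l with
  | nil => intro _; exact List.isChain_nil
  | cons c t ih =>
    cases t with
    | nil => intro _; exact List.isChain_singleton c
    | cons d t =>
      intro h
      rw [step] at h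
      cases hr : rulePairInt c d with
      | some p => rw [hr] at h; exact absurd h (by simp)
      | none =>
        rw [hr] at h
        simp only [Option.map_eq_none_iff] at h
        exact List.isChain_cons_cons.2 ⟨SHrule_none hr, ih h⟩

lemma step_some : ∀ {l l' : List BL}, step l = some l' →
    ∃ (l₁ : List BL) (c d e f : BL) (l₂ : List BL),
      rulePairInt c d = some (e, f) ∧ IrredWord (SHrule 3) (l₁ ++ [c]) ∧
      l = l₁ ++ c :: d :: l₂ ∧ l' = l₁ ++ e :: f :: l₂ := by
  intro l
  induction l with
  | nil => intro l' h; exact absurd h (by simp [step])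
  | cons c t ih =>
    cases t with
    | nil => intro l' h; exact absurd h (by simp [step])
    | cons d t =>
      intro l' h
      rw [step] at h
      cases hr : rulePairInt c d with
      | some p =>
        rw [hr] at h
        obtain ⟨e, f⟩ := p
        injection h with h
        exact ⟨[], c, d, e, f, t, hr, List.isChain_singleton c, rfl, h.symm⟩
      | none =>
        rw [hr] at h
        simp only [Option.map_eq_some_iff] at h
        obtain ⟨m, hm, rfl⟩ := h
        obtain ⟨m₁, a, b, e, f, m₂, hrab, hirr, heq, rfl⟩ := ih hm
        refine ⟨c :: m₁, a, b, e, f, m₂, hrab, ?_, by rw [heq]; rfl, rfl⟩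
        cases m₁ with
        | nil =>
          simp only [List.nil_append] at heq ⊢
          have : d = a := by injection heq
          subst this
          exact List.isChain_pair.2 (SHrule_none hr)
        | cons p q =>
          have : d = p := by injection heq
          subst this
          exact List.isChain_cons_cons.2 ⟨SHrule_none hr, hirr⟩

lemma wordInv_swap {r : ℕ} (u : List (Fin r)) {x y : Fin r} (h : y < x) (t : List (Fin r)) :
    wordInv (u ++ y :: x :: t) + 1 = wordInv (u ++ x :: y :: t) := by
  induction u with
  | nil =>
    have h1 : ¬ (x < y) := not_lt.2 h.le
    simp only [List.nil_append, wordInv, List.countP_cons, decide_eq_true_eq, h, h1,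
      if_true, if_false]
    omega
  | cons a u ih =>
    have hc : List.countP (fun b => decide (b < a)) (u ++ y :: x :: t)
        = List.countP (fun b => decide (b < a)) (u ++ x :: y :: t) := by
      simp only [List.countP_append, List.countP_cons]
      cases hx : decide (x < a) <;> cases hy : decide (y < a) <;>
        simp only [hx, hy, if_true, if_false, Bool.false_eq_true] <;> omega
    simp only [List.cons_append, wordInv, List.append_eq]
    rw [hc]
    omega

section Red

variable (red : MonoidAlgebra ℤ (Biword 3) →ₗ[ℤ] MonoidAlgebra ℤ (Biword 3))
variable (hred : IsLeftmostReduction (SHrule 3) red)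

include hred

lemma step_red {l l' : List BL} (h : step l = some l') :
    red (MonoidAlgebra.single (ofCols l) 1) = red (MonoidAlgebra.single (ofCols l') 1) ∧
      wordInv (l'.map Prod.fst) < wordInv (l.map Prod.fst) := by
  obtain ⟨l₁, c, d, e, f, l₂, hrab, hirr, rfl, rfl⟩ := step_some h
  obtain ⟨hdc, he, hf⟩ := rulePairInt_tops hrab
  constructor
  · rw [hred.map_step l₁ c d _ l₂ (SHrule_some hrab) hirr,
      MonoidAlgebra.single_mul_single, MonoidAlgebra.single_mul_single, one_mul, one_mul]
    have hof : ofCols l₁ * ofCols [e, f] * ofCols l₂ = ofCols (l₁ ++ e :: f :: l₂) := by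
      simp only [ofCols, ← FreeMonoid.ofList_append, List.append_assoc, List.cons_append,
        List.nil_append]
    rw [hof]
  · have := wordInv_swap (l₁.map Prod.fst) hdc (l₂.map Prod.fst)
    simp only [List.map_append, List.map_cons, he, hf]
    omega

/-- Leftmost normalization with fuel. -/
def nfAux : ℕ → List BL → List BL
  | 0, l => l
  | n + 1, l =>
    match step l with
    | none => l
    | some l' => nfAux n l'

lemma red_nfAux : ∀ (n : ℕ) (l : List BL), wordInv (l.map Prod.fst) ≤ n →
    red (MonoidAlgebra.single (ofCols l) 1)
      = MonoidAlgebra.single (ofCols (nfAux n l)) 1 := by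
  intro n
  induction n with
  | zero =>
    intro l hl
    cases h : step l with
    | none => rw [nfAux]; exact hred.map_irred l (step_none h)
    | some l' =>
      have := (step_red red hred h).2
      omega
  | succ n ih =>
    intro l hl
    cases h : step l with
    | none =>
      rw [show nfAux (n+1) l = l by rw [nfAux, h]]
      exact hred.map_irred l (step_none h)
    | some l' =>
      rw [show nfAux (n+1) l = nfAux n l' by rw [nfAux, h]]
      have hlt := (step_red red hred h).2
      rw [(step_red red hred h).1]
      exact ih l' (by omega)

/-- Leftmost normal form. -/
def nf (l : List BL) : List BL := nfAux (wordInv (l.map Prod.fst)) l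

lemma red_single (β : Biword 3) (z : ℤ) :
    red (MonoidAlgebra.single β z)
      = MonoidAlgebra.single (ofCols (nf (FreeMonoid.toList β))) z := by
  have h1 : MonoidAlgebra.single β z
      = z • (MonoidAlgebra.single β 1 : MonoidAlgebra ℤ (Biword 3)) := by
    rw [MonoidAlgebra.smul_single', mul_one]
  rw [h1, map_smul,
    show (MonoidAlgebra.single β 1 : MonoidAlgebra ℤ (Biword 3))
      = MonoidAlgebra.single (ofCols (FreeMonoid.toList β)) 1 from rfl,
    red_nfAux red hred _ (FreeMonoid.toList β) le_rfl,
    MonoidAlgebra.smul_single', mul_one]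
  rfl

end Red

lemma sortedJ_eq (J : Finset (Fin 3)) :
    sortedJ J = (List.finRange 3).filter (fun i => decide (i ∈ J)) :=
  List.Perm.eq_of_pairwise'
    (J.pairwise_sort _)
    ((List.pairwise_le_finRange 3).filter _)
    (List.perm_of_nodup_nodup_toFinset_eq (J.sort_nodup _)
      ((List.nodup_finRange 3).filter _)
      (by ext i; simp [sortedJ]))

/-- Target biword columns. -/
def g : List BL := [((0:Fin 3), (0:Fin 3)), ((1:Fin 3), (2:Fin 3)), ((2:Fin 3), (1:Fin 3))]

/-- The coefficient of the reduced expression on the target biword, as a closed integer. -/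
def val : ℤ :=
  ∑ J : Finset (Fin 3), ∑ σ ∈ permsOn 3 J,
    if J.card ≤ 3 then
      ∑ w : Fin (3 - J.card) → Fin 3,
        (if nf ((((List.finRange 3).filter (fun i => decide (i ∈ J))).map σ).zip
                ((List.finRange 3).filter (fun i => decide (i ∈ J)))
              ++ (sortWord (List.ofFn w)).zip (List.ofFn w)) = g
          then ((-1 : ℤ) ^ (J.card +
              wordInv (((List.finRange 3).filter (fun i => decide (i ∈ J))).map σ))) else 0)
    else 0

end Prop8Aux

/-- **Proposition 8** (no strong Master Theorem for the contextual algebra).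
For `r = 3`, the leftmost reduction associated with `(SH)` does not annihilate
the degree-3 component of `Ferm(1) ⬝ Bos(1)`:  `[FB_3(1)]_{SH} ≠ 0`. -/
theorem no_strong_Master_contextual
    (red : MonoidAlgebra ℤ (Biword 3) →ₗ[ℤ] MonoidAlgebra ℤ (Biword 3))
    (hred : IsLeftmostReduction (SHrule 3) red) :
    red (FB1 3 3) ≠ 0 := by
  intro h0
  have hval : (red (FB1 3 3)).coeff (ofCols Prop8Aux.g) = Prop8Aux.val := by
    rw [FB1, map_sum, MonoidAlgebra.coeff_sum, Finsupp.finset_sum_apply, Prop8Aux.val]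
    refine Finset.sum_congr rfl fun J _ => ?_
    rw [map_sum, MonoidAlgebra.coeff_sum, Finsupp.finset_sum_apply]
    refine Finset.sum_congr rfl fun σ _ => ?_
    rw [apply_ite red, map_zero, map_sum,
      apply_ite (fun E : MonoidAlgebra ℤ (Biword 3) => E.coeff (ofCols Prop8Aux.g))]
    simp only [MonoidAlgebra.coeff_zero, Finsupp.coe_zero, Pi.zero_apply]
    refine if_congr Iff.rfl ?_ rfl
    rw [MonoidAlgebra.coeff_sum, Finsupp.finset_sum_apply]
    refine Finset.sum_congr rfl fun w _ => ?_
    rw [Prop8Aux.red_single red hred, MonoidAlgebra.coeff_single, Finsupp.single_apply]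
    simp only [← Prop8Aux.sortedJ_eq]
    exact if_congr Iff.rfl rfl rfl
  have hv : Prop8Aux.val = 1 := by decide
  rw [h0, hv] at hval
  simp at hval
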